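/- Let (Xₜ) be the Markov chain on ℤ≥0 with X₀ = 1, absorbing at 0, which from state x > 0 moves to x + (Δ−1) with probability p = λ/(1+λ) and to x − 1 with probability 1 − p, where λ < 1/(Δ−1) and Δ ≥ 2. Then for any 0 < ε < 1 and T = ⌈(2Δ²/(1 − pΔ)²) · log(1/ε)⌉, the probability that X_T > 0 is at most ε. -/

import Mathlib

open MeasureTheory ProbabilityTheory

lemma exp_quad {x : ℝ} (hx : |x| ≤ 1) : Real.exp x ≤ 1 + x + (3/4) * x^2 := by
  have h := Real.exp_bound hx (n := 2) (by norm_num)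
  have h2 : ∑ m ∈ Finset.range 2, x^m / m.factorial = 1 + x := by
    simp [Finset.sum_range_succ]
  rw [h2] at h
  have h3 := (abs_le.mp h).2
  have h4 : |x|^2 = x^2 := sq_abs x
  have : ((Nat.succ 2 : ℕ) : ℝ) / ((Nat.factorial 2 : ℕ) * 2) = 3/4 := by
    norm_num [Nat.factorial]
  nlinarith [h3, h4]

set_option maxHeartbeats 1000000 in
lemma step_bound {D p δ s : ℝ} (hD : 2 ≤ D) (hp : 0 < p) (hδ : δ = 1 - p * D)
    (hδ0 : 0 < δ) (hs : s = δ / (2*D)) :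
    p * Real.exp (s*(D-1)) + (1-p) * Real.exp (-s) ≤ Real.exp (-(δ^2 / (2*D^2))) := by
  have hD0 : 0 < D := by linarith
  have hpD : p * D < 1 := by nlinarith
  have hδ1 : δ ≤ 1 := by nlinarith
  have hs0 : 0 < s := by rw [hs]; positivity
  have hsD : s * (2*D) = δ := by rw [hs]; field_simp
  have h1 : |s*(D-1)| ≤ 1 := by
    rw [abs_of_nonneg (by nlinarith)]; nlinarith
  have h2 : |(-s)| ≤ 1 := by
    rw [abs_neg, abs_of_nonneg hs0.le]; nlinarith
  have e1 := exp_quad h1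
  have e2 := exp_quad h2
  have hp1 : p < 1 := by nlinarith
  have hV : p*(D-1)^2 + (1-p) ≤ D := by nlinarith [(1 - p*D)*(D-2)]
  have hmain : p * (1 + s*(D-1) + 3/4 * (s*(D-1))^2)
      + (1-p) * (1 + (-s) + 3/4 * (-s)^2) ≤ 1 - (5/16)*(δ^2/D) := by
    have hexp : p * (1 + s*(D-1) + 3/4 * (s*(D-1))^2)
        + (1-p) * (1 + (-s) + 3/4 * (-s)^2)
        = 1 + s*(p*D - 1) + 3/4 * s^2 * (p*(D-1)^2 + (1-p)) := by ring
    rw [hexp]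
    have hq : 3/4 * s^2 * (p*(D-1)^2 + (1-p)) ≤ 3/4 * s^2 * D := by
      nlinarith [sq_nonneg s]
    have hsδ : s * δ = δ^2/(2*D) := by rw [hs]; field_simp
    have hs2 : s^2 = δ^2/(4*D^2) := by rw [hs]; field_simp; ring
    have : 3/4 * s^2 * D = 3/16 * (δ^2/D) := by rw [hs2]; field_simp; ring
    have hsd : s*(p*D-1) = -(δ^2/(2*D)) := by
      rw [show p*D - 1 = -δ by linarith, hs]; field_simp
    rw [hsd]
    have : δ^2/(2*D) = 8/16 * (δ^2/D) := by ring
    nlinarith [hq]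
  have hstep : p * Real.exp (s*(D-1)) + (1-p) * Real.exp (-s) ≤ 1 - (5/16)*(δ^2/D) := by
    calc p * Real.exp (s*(D-1)) + (1-p) * Real.exp (-s)
        ≤ p * (1 + s*(D-1) + 3/4 * (s*(D-1))^2) + (1-p) * (1 + (-s) + 3/4 * (-s)^2) :=
          add_le_add (mul_le_mul_of_nonneg_left e1 hp.le)
            (mul_le_mul_of_nonneg_left e2 (by linarith))
      _ ≤ 1 - (5/16)*(δ^2/D) := hmain
  refine hstep.trans ?_
  have h5 : 1 - (5/16)*(δ^2/D) ≤ Real.exp (-( (5/16)*(δ^2/D))) := by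
    have := Real.add_one_le_exp (-((5/16)*(δ^2/D)))
    linarith
  refine h5.trans (Real.exp_le_exp.mpr ?_)
  rw [neg_le_neg_iff]
  have hA : δ^2/(2*D^2) ≤ δ^2/(4*D) :=
    div_le_div_of_nonneg_left (sq_nonneg δ) (by positivity) (by nlinarith)
  have hB : (0:ℝ) ≤ δ^2/D := by positivity
  have hC : δ^2/(4*D) = 4/16 * (δ^2/D) := by ring
  linarith


theorem stmt_8 {Ω : Type*} [MeasureSpace Ω] [IsProbabilityMeasure (ℙ : Measure Ω)]
    (Δ : ℕ) (hΔ : 2 ≤ Δ) (lam : ℝ) (hlam : 0 < lam) (hlam' : lam < 1 / ((Δ : ℝ) - 1))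
    (p : ℝ) (hp : p = lam / (1 + lam))
    (ξ : ℕ → Ω → ℤ) (hξmeas : ∀ t, Measurable (ξ t))
    (hξindep : iIndepFun ξ ℙ)
    (hξup : ∀ t, (ℙ : Measure Ω) {ω | ξ t ω = (Δ : ℤ) - 1} = ENNReal.ofReal p)
    (hξdown : ∀ t, (ℙ : Measure Ω) {ω | ξ t ω = -1} = ENNReal.ofReal (1 - p))
    (X : ℕ → Ω → ℤ) (hX0 : ∀ ω, X 0 ω = 1)
    (hXstep : ∀ t ω, X (t + 1) ω = if X t ω = 0 then 0 else X t ω + ξ t ω)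
    (ε : ℝ) (hε : 0 < ε) (hε1 : ε < 1)
    (T : ℕ) (hT : T = ⌈(2 * (Δ : ℝ) ^ 2 / (1 - p * Δ) ^ 2) * Real.log (1 / ε)⌉₊) :
    (ℙ : Measure Ω) {ω | 0 < X T ω} ≤ ENNReal.ofReal ε := by
  -- numeric setup
  have hDR : (2:ℝ) ≤ (Δ:ℝ) := by exact_mod_cast hΔ
  have hD0 : (0:ℝ) < (Δ:ℝ) := by linarith
  have hp0 : 0 < p := by rw [hp]; positivity
  have hlam2 : lam * ((Δ:ℝ) - 1) < 1 := by
    have := (lt_div_iff₀ (by linarith : (0:ℝ) < (Δ:ℝ) - 1)).mp hlam'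
    linarith
  have hpΔ : p * (Δ:ℝ) < 1 := by
    rw [hp, div_mul_eq_mul_div, div_lt_one (by linarith)]
    nlinarith
  have hp1 : p < 1 := by nlinarith
  set δ : ℝ := 1 - p * Δ with hδdef
  have hδ0 : 0 < δ := by simp only [hδdef]; linarith
  set s : ℝ := δ / (2 * Δ) with hsdef
  have hs0 : 0 < s := by rw [hsdef]; positivity
  -- real-valued increments
  set η : ℕ → Ω → ℝ := fun t ω => ((ξ t ω : ℤ) : ℝ) with hη
  have hηmeas : ∀ t, Measurable (η t) := fun t => measurable_from_top.comp (hξmeas t)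
  have hηindep : iIndepFun η ℙ :=
    hξindep.comp (fun _ => (Int.cast : ℤ → ℝ)) (fun _ => measurable_from_top)
  -- events
  have hMA : ∀ t, MeasurableSet {ω | ξ t ω = (Δ:ℤ) - 1} := fun t =>
    hξmeas t (measurableSet_singleton _)
  have hMB : ∀ t, MeasurableSet {ω | ξ t ω = -1} := fun t =>
    hξmeas t (measurableSet_singleton _)
  have hΔZ : (2:ℤ) ≤ (Δ:ℤ) := by exact_mod_cast hΔ
  have hne : ((Δ:ℤ) - 1) ≠ -1 := by omega
  have hfull : ∀ t, (ℙ : Measure Ω) {ω | ξ t ω = (Δ:ℤ) - 1 ∨ ξ t ω = -1} = 1 := by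
    intro t
    have hsplit : {ω | ξ t ω = (Δ:ℤ) - 1 ∨ ξ t ω = -1}
        = {ω | ξ t ω = (Δ:ℤ) - 1} ∪ {ω | ξ t ω = -1} := rfl
    have hdisj : Disjoint {ω | ξ t ω = (Δ:ℤ) - 1} {ω | ξ t ω = -1} := by
      rw [Set.disjoint_left]
      intro ω h1 h2
      exact hne (h1.symm.trans h2)
    rw [hsplit, measure_union hdisj (hMB t), hξup, hξdown,
      ← ENNReal.ofReal_add hp0.le (by linarith)]
    norm_num
  have hGnull : (ℙ : Measure Ω) {ω | ¬ ∀ t, ξ t ω = (Δ:ℤ) - 1 ∨ ξ t ω = -1} = 0 := by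
    have hset : {ω | ¬ ∀ t, ξ t ω = (Δ:ℤ) - 1 ∨ ξ t ω = -1}
        = ⋃ t, {ω | ξ t ω = (Δ:ℤ) - 1 ∨ ξ t ω = -1}ᶜ := by
      ext ω; simp [not_forall]
    rw [hset]
    refine measure_iUnion_null fun t => ?_
    exact (prob_compl_eq_zero_iff ((hMA t).union (hMB t))).mpr (hfull t)
  have hae : ∀ᵐ ω ∂(ℙ : Measure Ω), ∀ t, ξ t ω = (Δ:ℤ) - 1 ∨ ξ t ω = -1 :=
    ae_iff.mpr hGnull
  -- pointwise structure of the walk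
  have hXpt : ∀ ω, (∀ t, ξ t ω = (Δ:ℤ) - 1 ∨ ξ t ω = -1) → ∀ t,
      0 ≤ X t ω ∧ (0 < X t ω → X t ω = 1 + ∑ j ∈ Finset.range t, ξ j ω) := by
    intro ω hω t
    induction t with
    | zero =>
        refine ⟨by rw [hX0]; norm_num, fun _ => by simp [hX0]⟩
    | succ n ih =>
        have hstep := hXstep n ω
        by_cases h0 : X n ω = 0
        · rw [hstep, if_pos h0]
          exact ⟨le_rfl, fun h => absurd h (lt_irrefl 0)⟩
        · rw [hstep, if_neg h0]
          have hn : 0 < X n ω := lt_of_le_of_ne ih.1 (Ne.symm h0)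
          have heq := ih.2 hn
          constructor
          · rcases hω n with h | h <;> rw [h] <;> omega
          · intro _
            rw [heq, Finset.sum_range_succ]; ring
  -- inclusion into the sum event
  have hincl : {ω | 0 < X T ω} ⊆
      {ω | (0:ℝ) ≤ ∑ j ∈ Finset.range T, η j ω}
        ∪ {ω | ¬ ∀ t, ξ t ω = (Δ:ℤ) - 1 ∨ ξ t ω = -1} := by
    intro ω hω
    by_cases hg : ∀ t, ξ t ω = (Δ:ℤ) - 1 ∨ ξ t ω = -1
    · left
      have heq := (hXpt ω hg T).2 hω
      have hsum : (0:ℤ) ≤ ∑ j ∈ Finset.range T, ξ j ω := by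
        have := hω
        simp only [Set.mem_setOf_eq] at hω
        omega
      simp only [Set.mem_setOf_eq, hη]
      calc (0:ℝ) = ((0:ℤ) : ℝ) := by norm_num
        _ ≤ ((∑ j ∈ Finset.range T, ξ j ω : ℤ) : ℝ) := by exact_mod_cast hsum
        _ = ∑ j ∈ Finset.range T, ((ξ j ω : ℤ) : ℝ) := by push_cast; ring
    · right; exact hg
  have hmono : (ℙ : Measure Ω) {ω | 0 < X T ω}
      ≤ (ℙ : Measure Ω) {ω | (0:ℝ) ≤ ∑ j ∈ Finset.range T, η j ω} := by
    refine (measure_mono hincl).trans ?_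
    refine (measure_union_le _ _).trans ?_
    rw [hGnull, add_zero]
  -- a.e. bounds on η
  have hηbd : ∀ᵐ ω ∂(ℙ : Measure Ω), ∀ t, η t ω = (Δ:ℝ) - 1 ∨ η t ω = -1 := by
    filter_upwards [hae] with ω hω t
    rcases hω t with h | h
    · left; simp only [hη, h]; push_cast; ring
    · right; simp only [hη, h]; norm_num
  have hint : ∀ t, Integrable (fun ω => Real.exp (s * η t ω)) ℙ := by
    intro t
    refine Integrable.mono' (integrable_const (Real.exp (s * ((Δ:ℝ) - 1))))
      (((hηmeas t).const_mul s).exp.aestronglyMeasurable) ?_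
    filter_upwards [hηbd] with ω hω
    rw [Real.norm_eq_abs, Real.abs_exp]
    apply Real.exp_le_exp.mpr
    rcases hω t with h | h
    · rw [h]
    · rw [h]; nlinarith
  have hintS : Integrable (fun ω => Real.exp (s * ∑ j ∈ Finset.range T, η j ω)) ℙ := by
    refine Integrable.mono' (integrable_const (Real.exp (s * ((T:ℝ) * ((Δ:ℝ) - 1))))) ?_ ?_
    · exact ((Finset.measurable_sum _ (fun j _ => hηmeas j)).const_mul s).exp.aestronglyMeasurable
    · filter_upwards [hηbd] with ω hω
      rw [Real.norm_eq_abs, Real.abs_exp]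
      apply Real.exp_le_exp.mpr
      have hsum : ∑ j ∈ Finset.range T, η j ω ≤ ∑ j ∈ Finset.range T, ((Δ:ℝ) - 1) := by
        refine Finset.sum_le_sum (fun j _ => ?_)
        rcases hω j with h | h
        · rw [h]
        · rw [h]; linarith
      rw [Finset.sum_const, Finset.card_range, nsmul_eq_mul] at hsum
      exact mul_le_mul_of_nonneg_left hsum hs0.le
  -- Chernoff bound
  have hchern := measure_ge_le_exp_mul_mgf (μ := ℙ)
    (X := fun ω => ∑ j ∈ Finset.range T, η j ω) 0 hs0.le hintS
  rw [mul_zero, Real.exp_zero, one_mul] at hchern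
  have hfuneq : (fun ω => ∑ j ∈ Finset.range T, η j ω) = ∑ j ∈ Finset.range T, η j := by
    funext ω; rw [Finset.sum_apply]
  have hmgfsum : mgf (fun ω => ∑ j ∈ Finset.range T, η j ω) ℙ s
      = ∏ j ∈ Finset.range T, mgf (η j) ℙ s := by
    rw [hfuneq]; exact hηindep.mgf_sum hηmeas _
  -- mgf of each increment
  have hPA : ∀ t, ((ℙ : Measure Ω) {ω | ξ t ω = (Δ:ℤ) - 1}).toReal = p := fun t => by
    rw [hξup t, ENNReal.toReal_ofReal hp0.le]
  have hPAc : ∀ t, ((ℙ : Measure Ω) {ω | ξ t ω = (Δ:ℤ) - 1}ᶜ).toReal = 1 - p := by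
    intro t
    rw [measure_compl (hMA t) (measure_ne_top _ _), measure_univ, hξup t,
      ENNReal.toReal_sub_of_le (ENNReal.ofReal_le_one.mpr hp1.le) (by norm_num),
      ENNReal.toReal_one, ENNReal.toReal_ofReal hp0.le]
  have hmgf : ∀ t, mgf (η t) ℙ s = p * Real.exp (s * ((Δ:ℝ) - 1)) + (1 - p) * Real.exp (-s) := by
    intro t
    have h1 : mgf (η t) ℙ s = ∫ ω, Real.exp (s * η t ω) ∂ℙ := rfl
    rw [h1, ← integral_add_compl (hMA t) (hint t)]
    have hAeq : ∫ ω in {ω | ξ t ω = (Δ:ℤ) - 1}, Real.exp (s * η t ω) ∂(ℙ : Measure Ω)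
        = p * Real.exp (s * ((Δ:ℝ) - 1)) := by
      rw [setIntegral_congr_fun (hMA t) (g := fun _ => Real.exp (s * ((Δ:ℝ) - 1)))
        (fun ω hω => by
          simp only [Set.mem_setOf_eq] at hω
          simp only [hη, hω]; push_cast; ring_nf),
        setIntegral_const, measureReal_def, hPA t, smul_eq_mul]
    have hBeq : ∫ ω in {ω | ξ t ω = (Δ:ℤ) - 1}ᶜ, Real.exp (s * η t ω) ∂(ℙ : Measure Ω)
        = (1 - p) * Real.exp (-s) := by
      rw [setIntegral_congr_ae (hMA t).compl ?_, setIntegral_const, measureReal_def, hPAc t, smul_eq_mul]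
      filter_upwards [hae] with ω hω hmem
      have hωt : ξ t ω = -1 := by
        rcases hω t with h | h
        · exact absurd h hmem
        · exact h
      simp only [hη, hωt]; norm_num
    rw [hAeq, hBeq]
  -- per-step bound and product
  have hstepb := step_bound hDR hp0 hδdef hδ0 hsdef
  have hprod : ∏ j ∈ Finset.range T, mgf (η j) ℙ s
      ≤ Real.exp (-(δ^2 / (2 * (Δ:ℝ)^2)))^T := by
    calc ∏ j ∈ Finset.range T, mgf (η j) ℙ s
        ≤ ∏ _j ∈ Finset.range T, Real.exp (-(δ^2 / (2 * (Δ:ℝ)^2))) := by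
          refine Finset.prod_le_prod (fun j _ => mgf_nonneg) (fun j _ => ?_)
          rw [hmgf j]; exact hstepb
      _ = _ := by rw [Finset.prod_const, Finset.card_range]
  -- exponent arithmetic
  have hlogpos : 0 < Real.log (1/ε) := Real.log_pos (by rw [lt_div_iff₀ hε]; linarith)
  have hTc : (2 * (Δ:ℝ)^2 / δ^2) * Real.log (1/ε) ≤ (T:ℝ) := by
    rw [hT]; exact_mod_cast Nat.le_ceil _
  have hfinal : Real.exp (-(δ^2 / (2 * (Δ:ℝ)^2)))^T ≤ ε := by
    rw [← Real.exp_nat_mul]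
    have hkey : Real.log (1/ε) ≤ (T:ℝ) * (δ^2 / (2 * (Δ:ℝ)^2)) := by
      have h2 : (2 * (Δ:ℝ)^2 / δ^2) * Real.log (1/ε) * (δ^2 / (2 * (Δ:ℝ)^2))
          = Real.log (1/ε) := by field_simp
      calc Real.log (1/ε)
          = (2 * (Δ:ℝ)^2 / δ^2) * Real.log (1/ε) * (δ^2 / (2 * (Δ:ℝ)^2)) := h2.symm
        _ ≤ (T:ℝ) * (δ^2 / (2 * (Δ:ℝ)^2)) :=
            mul_le_mul_of_nonneg_right hTc (by positivity)
    have hlogε : Real.log (1/ε) = - Real.log ε := by rw [one_div, Real.log_inv]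
    have hexp : (T:ℝ) * (-(δ^2 / (2 * (Δ:ℝ)^2))) ≤ Real.log ε := by
      rw [hlogε] at hkey; linarith
    calc Real.exp ((T:ℝ) * (-(δ^2 / (2 * (Δ:ℝ)^2))))
        ≤ Real.exp (Real.log ε) := Real.exp_le_exp.mpr hexp
      _ = ε := Real.exp_log hε
  -- assemble
  refine hmono.trans ?_
  rw [ENNReal.le_ofReal_iff_toReal_le (measure_ne_top _ _) hε.le]
  refine hchern.trans ?_
  rw [hmgfsum]
  exact hprod.trans hfinal
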